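/- arXiv:0809.1264 — 7 statements merged into one kernel-verified Lean document; each statement's English description precedes it below -/
import Mathlib

section
/- If p is a source with p(1) ≥ 2/3, then the minimum maximum pointwise redundancy is exactly R*_opt(p) = 1 + lg p(1). -/
/-- A source: a positive, monotonically nonincreasing probability mass function on `Fin n`. -/
def IsSource (n : ℕ) (p : Fin n → ℝ) : Prop :=
  (∀ i, 0 < p i) ∧ (∑ i, p i = 1) ∧ (∀ i j : Fin n, i ≤ j → p j ≤ p i)

/-- A codeword-length vector: positive integer lengths satisfying the Kraft inequality. -/
def IsCLV (n : ℕ) (l : Fin n → ℤ) : Prop :=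
  (∀ i, 1 ≤ l i) ∧ (∑ i, (2:ℝ) ^ (-(l i)) ≤ 1)

/-- Maximum pointwise redundancy `R*(l,p) = max_i (l(i) + lg p(i))`. -/
noncomputable def Rstar (n : ℕ) (l : Fin n → ℤ) (p : Fin n → ℝ) : ℝ :=
  ⨆ i : Fin n, ((l i : ℝ) + Real.logb 2 (p i))

/-- Minimum maximum pointwise redundancy over all codeword-length vectors. -/
noncomputable def RstarOpt (n : ℕ) (p : Fin n → ℝ) : ℝ :=
  sInf {r : ℝ | ∃ l : Fin n → ℤ, IsCLV n l ∧ Rstar n l p = r}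

theorem stmt2 (n : ℕ) (hn : 2 ≤ n) (p : Fin n → ℝ) (hp : IsSource n p)
    (h1 : 2/3 ≤ p ⟨0, by omega⟩) :
    RstarOpt n p = 1 + Real.logb 2 (p ⟨0, by omega⟩) := by
  obtain ⟨hpos, hsum, hmono⟩ := hp
  have hne : Nonempty (Fin n) := ⟨⟨0, by omega⟩⟩
  set i0 : Fin n := ⟨0, by omega⟩ with hi0
  set c := Real.logb 2 (p i0) with hc
  have hp0 : 0 < p i0 := hpos i0
  have hple : ∀ i, p i ≤ p i0 := fun i => hmono i0 i (by simp [hi0, Fin.le_def])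
  have hlogle : ∀ i, Real.logb 2 (p i) ≤ c := fun i =>
    Real.logb_le_logb_of_le one_lt_two (hpos i) (hple i)
  set l : Fin n → ℤ := fun i => ⌊1 + c - Real.logb 2 (p i)⌋ with hl
  have hl0 : l i0 = 1 := by simp [hl, hc]
  have hlge1 : ∀ i, 1 ≤ l i := fun i => by
    show 1 ≤ ⌊1 + c - Real.logb 2 (p i)⌋
    exact Int.le_floor.mpr (by push_cast; linarith [hlogle i])
  -- key pointwise bound on redundancy
  have hred : ∀ i, (l i : ℝ) + Real.logb 2 (p i) ≤ 1 + c := fun i => by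
    have := Int.floor_le (1 + c - Real.logb 2 (p i))
    simp only [hl]
    linarith
  have hred0 : (l i0 : ℝ) + Real.logb 2 (p i0) = 1 + c := by
    rw [hl0]; push_cast; ring
  -- Kraft inequality
  have hkraft : ∑ i, (2:ℝ) ^ (-(l i)) ≤ 1 := by
    have hbound : ∀ i, (2:ℝ) ^ (-(l i)) ≤ 2 * (p i / p i0) := fun i => by
      have h1' : (1 + c - Real.logb 2 (p i)) - 1 ≤ (l i : ℝ) := le_of_lt (by
        simpa [hl] using Int.sub_one_lt_floor (1 + c - Real.logb 2 (p i)))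
      have : (-(l i) : ℝ) ≤ 1 - c + Real.logb 2 (p i) := by push_cast; linarith
      calc (2:ℝ) ^ (-(l i)) = (2:ℝ) ^ ((-(l i) : ℤ) : ℝ) := by
            rw [Real.rpow_intCast]
        _ ≤ (2:ℝ) ^ (1 - c + Real.logb 2 (p i)) :=
            Real.rpow_le_rpow_of_exponent_le one_le_two (by push_cast; linarith)
        _ = 2 * (p i / p i0) := by
            rw [show (1:ℝ) - c + Real.logb 2 (p i) = 1 + (Real.logb 2 (p i) - c) by ring,
              Real.rpow_add two_pos, Real.rpow_one, Real.rpow_sub two_pos,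
              Real.rpow_logb two_pos (by norm_num) (hpos i),
              Real.rpow_logb two_pos (by norm_num) hp0]
    have hsplit : ∑ i, (2:ℝ) ^ (-(l i)) =
        (2:ℝ) ^ (-(l i0)) + ∑ i ∈ Finset.univ.erase i0, (2:ℝ) ^ (-(l i)) := by
      exact (Finset.add_sum_erase _ _ (Finset.mem_univ i0)).symm
    have hsum' : ∑ i ∈ Finset.univ.erase i0, p i = 1 - p i0 := by
      have := Finset.add_sum_erase Finset.univ p (Finset.mem_univ i0)
      linarith [hsum ▸ this]
    have h2 : ∑ i ∈ Finset.univ.erase i0, (2:ℝ) ^ (-(l i)) ≤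
        ∑ i ∈ Finset.univ.erase i0, p i / p i0 := by
      apply Finset.sum_le_sum
      intro i hi
      have hli := hlge1 i
      have hilt : i ≠ i0 := Finset.ne_of_mem_erase hi
      -- 2^(-l i) ≤ 2*(p i/p i0) isn't enough; use l i ≥ ⌈...⌉? use stronger:
      -- since l i is an integer and l i > c - logb p i, we have
      -- 2^(-l i) ≤ p i / p i0  when ⌊1+x⌋ ≥ x ... indeed ⌊1+x⌋ = 1+⌊x⌋ ≥ x? no, ⌊x⌋ ≥ x-1... 
      have hgt : (Real.logb 2 (p i0) - Real.logb 2 (p i)) < (l i : ℝ) := by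
        have := Int.sub_one_lt_floor (1 + c - Real.logb 2 (p i))
        simp only [hl, hc]
        linarith
      have : ((-(l i) : ℤ) : ℝ) ≤ Real.logb 2 (p i) - c := by push_cast; linarith [hgt]
      calc (2:ℝ) ^ (-(l i)) = (2:ℝ) ^ ((-(l i) : ℤ) : ℝ) := by rw [Real.rpow_intCast]
        _ ≤ (2:ℝ) ^ (Real.logb 2 (p i) - c) :=
            Real.rpow_le_rpow_of_exponent_le one_le_two this
        _ = p i / p i0 := by
            rw [Real.rpow_sub two_pos,
              Real.rpow_logb two_pos (by norm_num) (hpos i),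
              Real.rpow_logb two_pos (by norm_num) hp0]
    have h3 : ∑ i ∈ Finset.univ.erase i0, p i / p i0 = (1 - p i0) / p i0 := by
      rw [← Finset.sum_div, hsum']
    have h4 : (1 - p i0) / p i0 ≤ 1/2 := by
      rw [div_le_div_iff₀ hp0 (by norm_num)]
      linarith
    have h5 : (2:ℝ) ^ (-(l i0)) = 1/2 := by rw [hl0]; norm_num
    rw [hsplit, h5]
    linarith [h2.trans (le_of_eq h3), h4]
  -- Rstar of l equals 1 + c
  have hRl : Rstar n l p = 1 + c := by
    apply le_antisymm
    · exact ciSup_le hred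
    · have := le_ciSup (f := fun i => (l i : ℝ) + Real.logb 2 (p i))
        (Set.Finite.bddAbove (Set.finite_range _)) i0
      rw [hred0] at this
      exact this
  -- lower bound for any CLV
  have hlb : ∀ r ∈ {r : ℝ | ∃ l : Fin n → ℤ, IsCLV n l ∧ Rstar n l p = r},
      1 + c ≤ r := by
    rintro r ⟨l', ⟨hl'1, _⟩, rfl⟩
    have h0 : (1:ℝ) + c ≤ (l' i0 : ℝ) + Real.logb 2 (p i0) := by
      have := hl'1 i0
      have : (1:ℝ) ≤ (l' i0 : ℝ) := by exact_mod_cast this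
      linarith
    exact h0.trans (le_ciSup (f := fun i => ((l' i : ℝ) + Real.logb 2 (p i)))
      (Set.Finite.bddAbove (Set.finite_range _)) i0)
  have hmem : 1 + c ∈ {r : ℝ | ∃ l : Fin n → ℤ, IsCLV n l ∧ Rstar n l p = r} :=
    ⟨l, ⟨hlge1, hkraft⟩, hRl⟩
  exact le_antisymm (csInf_le ⟨1 + c, hlb⟩ hmem) (le_csInf ⟨_, hmem⟩ hlb)
end

section
/- Let λ ≥ 2 be an integer and let p be a source with 2^{−λ} ≤ p(1) < 1/(2^λ − 1). Then R*_opt(p) ≥ λ + lg p(1). -/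
lemma key_bound (n : ℕ) (hn : 2 ≤ n) (lam : ℕ) (hlam : 1 ≤ lam)
    (p : Fin n → ℝ) (hp : IsSource n p)
    (h2 : p ⟨0, by linarith⟩ < 1 / ((2:ℝ) ^ lam - 1))
    (l : Fin n → ℤ) (hl : IsCLV n l) :
    (lam:ℝ) + Real.logb 2 (p ⟨0, by linarith⟩) ≤ Rstar n l p := by
  set z : Fin n := ⟨0, by linarith⟩ with hz
  set q : ℝ := p z with hqdef
  have hq : 0 < q := hp.1 z
  by_contra hcon
  push_neg at hcon
  have hterm : ∀ i, (l i : ℝ) + Real.logb 2 (p i) ≤ Rstar n l p := by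
    intro i
    unfold Rstar
    exact le_ciSup (f := fun j : Fin n => ((l j : ℝ) + Real.logb 2 (p j))) (Set.Finite.bddAbove (Set.finite_range _)) i
  set A : ℝ := (2:ℝ) ^ lam with hAdef
  have hApos : (0:ℝ) < A := pow_pos two_pos lam
  have hA1 : (1:ℝ) < A := one_lt_pow₀ one_lt_two (by omega)
  -- step 1 : l z ≤ lam - 1
  have h0 : (l z : ℝ) + Real.logb 2 q < (lam:ℝ) + Real.logb 2 q :=
    lt_of_le_of_lt (hterm z) hcon
  have hl0 : l z ≤ (lam:ℤ) - 1 := by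
    have : (l z : ℝ) < (lam:ℝ) := by linarith
    have : l z < (lam:ℤ) := by exact_mod_cast this
    omega
  have hz0 : 2 * A⁻¹ ≤ (2:ℝ) ^ (-(l z)) := by
    have h1' : (2:ℝ) ^ (-(lam:ℤ) + 1) ≤ (2:ℝ) ^ (-(l z)) :=
      zpow_le_zpow_right₀ one_le_two (by omega)
    have h2' : (2:ℝ) ^ (-(lam:ℤ) + 1) = 2 * A⁻¹ := by
      rw [zpow_add₀ (two_ne_zero), zpow_neg, zpow_natCast, zpow_one]
      ring
    linarith
  -- step 2 : per-index bound
  have key : ∀ i : Fin n, p i / q * A⁻¹ < (2:ℝ) ^ (-(l i)) := by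
    intro i
    have hi : (l i : ℝ) + Real.logb 2 (p i) < (lam:ℝ) + Real.logb 2 q :=
      lt_of_le_of_lt (hterm i) hcon
    have h' : (2:ℝ) ^ (Real.logb 2 (p i) - Real.logb 2 q - (lam:ℝ)) < (2:ℝ) ^ (-(l i : ℝ)) :=
      Real.rpow_lt_rpow_of_exponent_lt one_lt_two (by linarith)
    calc p i / q * A⁻¹
        = (2:ℝ) ^ (Real.logb 2 (p i) - Real.logb 2 q - (lam:ℝ)) := by
          rw [Real.rpow_sub two_pos, Real.rpow_sub two_pos,
            Real.rpow_logb two_pos (by norm_num) (hp.1 i),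
            Real.rpow_logb two_pos (by norm_num) hq, Real.rpow_natCast]
          rw [hAdef]; ring
      _ < (2:ℝ) ^ (-(l i : ℝ)) := h'
      _ = (2:ℝ) ^ (-(l i)) := by
          rw [← Real.rpow_intCast]
          norm_num
  -- step 3 : sum up
  have hsum := hl.2
  rw [← Finset.add_sum_erase _ _ (Finset.mem_univ z)] at hsum
  have hw : (⟨1, by omega⟩ : Fin n) ∈ Finset.univ.erase z := by
    simp [Finset.mem_erase, hz, Fin.ext_iff]
  have hstrict : ∑ i ∈ Finset.univ.erase z, p i / q * A⁻¹ <
      ∑ i ∈ Finset.univ.erase z, (2:ℝ) ^ (-(l i)) :=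
    Finset.sum_lt_sum_of_nonempty ⟨_, hw⟩ (fun i _ => key i)
  have hsum_p : ∑ i ∈ Finset.univ.erase z, p i = 1 - q := by
    have h := hp.2.1
    rw [← Finset.add_sum_erase _ _ (Finset.mem_univ z)] at h
    linarith
  have hcalc : ∑ i ∈ Finset.univ.erase z, p i / q * A⁻¹ = (1 - q) / q * A⁻¹ := by
    rw [← Finset.sum_mul, ← Finset.sum_div, hsum_p]
  have hfinal : 2 * A⁻¹ + (1 - q) / q * A⁻¹ < 1 := by
    rw [hcalc] at hstrict
    linarith
  -- contradiction
  have hmul : (2 * A⁻¹ + (1 - q) / q * A⁻¹) * (q * A) = q + 1 := by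
    field_simp
    ring
  have h3 : q + 1 < q * A := by
    calc q + 1 = (2 * A⁻¹ + (1 - q) / q * A⁻¹) * (q * A) := hmul.symm
      _ < 1 * (q * A) := by
          apply mul_lt_mul_of_pos_right hfinal (mul_pos hq hApos)
      _ = q * A := one_mul _
  have h4 : q * (A - 1) < 1 := by
    have hA1' : (0:ℝ) < A - 1 := by linarith
    exact (lt_div_iff₀ hA1').mp h2
  nlinarith

theorem stmt4 (n : ℕ) (hn : 2 ≤ n) (lam : ℕ) (hlam : 2 ≤ lam)
    (p : Fin n → ℝ) (hp : IsSource n p)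
    (h1 : (2:ℝ) ^ (-(lam:ℤ)) ≤ p ⟨0, by omega⟩)
    (h2 : p ⟨0, by omega⟩ < 1 / ((2:ℝ) ^ lam - 1)) :
    (lam:ℝ) + Real.logb 2 (p ⟨0, by omega⟩) ≤ RstarOpt n p := by
  apply le_csInf
  · refine ⟨Rstar n (fun _ => (n:ℤ)) p, fun _ => (n:ℤ), ⟨fun i => by show (1:ℤ) ≤ (n:ℤ); exact_mod_cast (by omega : 1 ≤ n), ?_⟩, rfl⟩
    have hle : (n:ℝ) ≤ 2 ^ n := by exact_mod_cast (Nat.lt_two_pow_self (n := n)).le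
    have : ∑ _i : Fin n, (2:ℝ) ^ (-(n:ℤ)) = (n:ℝ) * ((2:ℝ)^n)⁻¹ := by
      rw [Finset.sum_const, Finset.card_univ, Fintype.card_fin, nsmul_eq_mul,
        zpow_neg, zpow_natCast]
    rw [this]
    rw [mul_inv_le_iff₀ (by positivity), one_mul]
    exact hle
  · rintro r ⟨l, hl, rfl⟩
    exact key_bound n hn lam (by omega) p hp h2 l hl
end

section
/- Let λ ≥ 2 be an integer, let p₁ satisfy 2/(2^λ + 1) ≤ p₁ < 2^{−(λ−1)}, and let ε satisfy 0 < ε < 1 − p₁·2^{λ−1}. Define the source p on n = 2^λ symbols by p(1) = p₁, p(i) = (1 − p₁ − ε)/(2^λ − 2) for 2 ≤ i ≤ n−1, and p(n) = ε. Then p is a monotonically nonincreasing probability mass function and R*_opt(p) = λ + lg p₁. -/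
theorem stmt11 (lam : ℕ) (hlam : 2 ≤ lam) (p₁ ε : ℝ)
    (hp1 : 2 / ((2:ℝ) ^ lam + 1) ≤ p₁) (hp1' : p₁ < (2:ℝ) ^ (-(lam:ℤ) + 1))
    (hε : 0 < ε) (hε' : ε < 1 - p₁ * (2:ℝ) ^ ((lam:ℤ) - 1))
    (p : Fin (2 ^ lam) → ℝ)
    (h0 : p ⟨0, Nat.two_pow_pos lam⟩ = p₁)
    (hmid : ∀ i : Fin (2 ^ lam), 0 < i.val → i.val < 2 ^ lam - 1 →
      p i = (1 - p₁ - ε) / ((2:ℝ) ^ lam - 2))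
    (hlast : p ⟨2 ^ lam - 1, by have := Nat.two_pow_pos lam; omega⟩ = ε) :
    IsSource (2 ^ lam) p ∧ RstarOpt (2 ^ lam) p = (lam:ℝ) + Real.logb 2 p₁ := by
  have hn4 : 4 ≤ 2 ^ lam := by
    calc (4:ℕ) = 2 ^ 2 := rfl
    _ ≤ 2 ^ lam := Nat.pow_le_pow_right (by norm_num) hlam
  set X : ℝ := (2:ℝ) ^ lam with hXdef
  have hX4 : (4:ℝ) ≤ X := by
    have : ((4:ℕ):ℝ) ≤ ((2 ^ lam : ℕ):ℝ) := by exact_mod_cast hn4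
    simpa [hXdef] using this
  have hXpos : (0:ℝ) < X := by linarith
  have hd : (0:ℝ) < X - 2 := by linarith
  -- rewrite the zpow hypotheses
  have h2a : (2:ℝ) ^ (-(lam:ℤ) + 1) = 2 / X := by
    rw [zpow_add₀ (two_ne_zero) _ 1, zpow_neg, zpow_natCast, zpow_one, hXdef]
    ring
  have h2b : (2:ℝ) ^ ((lam:ℤ) - 1) = X / 2 := by
    rw [zpow_sub₀ (two_ne_zero), zpow_natCast, zpow_one, hXdef]
  rw [h2a] at hp1'
  rw [h2b] at hε'
  have hp1X : 2 ≤ p₁ * (X + 1) := by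
    rw [div_le_iff₀ (by linarith)] at hp1; linarith
  have hp1X2 : p₁ * X < 2 := by
    rw [lt_div_iff₀ hXpos] at hp1'; linarith
  have hp1pos : 0 < p₁ := by nlinarith
  have hnum : 0 < 1 - p₁ - ε := by nlinarith
  set q : ℝ := (1 - p₁ - ε) / (X - 2) with hqdef
  have hqpos : 0 < q := div_pos hnum hd
  have hqX : (X - 2) * q = 1 - p₁ - ε := mul_div_cancel₀ _ (ne_of_gt hd)
  have hqle : q ≤ p₁ := by
    rw [hqdef, div_le_iff₀ hd]; nlinarith
  have hεq : ε ≤ q := by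
    rw [hqdef, le_div_iff₀ hd]
    nlinarith [mul_nonneg (by linarith : (0:ℝ) ≤ 1 - p₁ * (X/2) - ε) (by linarith : (0:ℝ) ≤ X - 1),
      mul_nonneg (by linarith : (0:ℝ) ≤ p₁ * (X + 1) - 2) (by linarith : (0:ℝ) ≤ X - 2)]
  have hp2q : p₁ < 2 * q := by
    rw [hqdef, lt_div_iff₀ hd] at *
    nlinarith
  -- the two special indices
  set i0 : Fin (2 ^ lam) := ⟨0, Nat.two_pow_pos lam⟩ with hi0
  set ilast : Fin (2 ^ lam) := ⟨2 ^ lam - 1, by have := Nat.two_pow_pos lam; omega⟩ with hilast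
  have hneq : ilast ≠ i0 := by
    simp only [hi0, hilast, Ne, Fin.mk.injEq]; omega
  -- closed form of p
  have pform : ∀ i : Fin (2 ^ lam),
      p i = if i.val = 0 then p₁ else if i.val = 2 ^ lam - 1 then ε else q := by
    intro i
    split_ifs with hA hB
    · rw [show i = i0 from Fin.ext hA]; exact h0
    · rw [show i = ilast from Fin.ext hB]; exact hlast
    · have hlt := i.isLt
      exact hmid i (Nat.pos_of_ne_zero hA) (by omega)
  have hpos : ∀ i, 0 < p i := by
    intro i; rw [pform i]; split_ifs <;> assumption
  have hmono : ∀ i j : Fin (2 ^ lam), i ≤ j → p j ≤ p i := by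
    intro i j hij
    have hij' : i.val ≤ j.val := hij
    have hi := i.isLt; have hj := j.isLt
    rw [pform i, pform j]
    split_ifs <;> first
      | rfl
      | linarith
      | (exfalso; omega)
  -- the splitting of a sum over Fin (2^lam)
  set s : Finset (Fin (2 ^ lam)) := (Finset.univ.erase i0).erase ilast with hs
  have hmem : ilast ∈ Finset.univ.erase i0 := Finset.mem_erase.mpr ⟨hneq, Finset.mem_univ _⟩
  have hsplit : ∀ f : Fin (2 ^ lam) → ℝ,
      ∑ i, f i = f i0 + (f ilast + ∑ i ∈ s, f i) := by
    intro f
    rw [← Finset.add_sum_erase Finset.univ f (Finset.mem_univ i0),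
        ← Finset.add_sum_erase _ f hmem]
  have hcard : s.card = 2 ^ lam - 2 := by
    rw [hs, Finset.card_erase_of_mem hmem,
        Finset.card_erase_of_mem (Finset.mem_univ _), Finset.card_univ, Fintype.card_fin]
    omega
  have hcardR : ((s.card : ℕ) : ℝ) = X - 2 := by
    rw [hcard, Nat.cast_sub (by omega), Nat.cast_pow, hXdef]
    norm_num
  have hmidmem : ∀ i ∈ s, 0 < i.val ∧ i.val < 2 ^ lam - 1 := by
    intro i hi
    rw [hs, Finset.mem_erase, Finset.mem_erase] at hi
    have h1 : i ≠ ilast := hi.1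
    have h2 : i ≠ i0 := hi.2.1
    have h3 : i.val ≠ 2 ^ lam - 1 := fun h => h1 (Fin.ext h)
    have h4 : i.val ≠ 0 := fun h => h2 (Fin.ext h)
    have := i.isLt
    omega
  -- sum of p is 1
  have hsum : ∑ i, p i = 1 := by
    rw [hsplit p, h0, hlast]
    have : ∑ i ∈ s, p i = ∑ _i ∈ s, q := by
      refine Finset.sum_congr rfl fun i hi => ?_
      obtain ⟨ha, hb⟩ := hmidmem i hi
      rw [hmid i ha hb]
    rw [this, Finset.sum_const, nsmul_eq_mul, hcardR]
    linarith [hqX]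
  have hsource : IsSource (2 ^ lam) p := ⟨hpos, hsum, hmono⟩
  refine ⟨hsource, ?_⟩
  -- constant-length code
  set lc : Fin (2 ^ lam) → ℤ := fun _ => (lam : ℤ) with hlc
  have hXinv : (2:ℝ) ^ (-(lam:ℤ)) = X⁻¹ := by
    rw [zpow_neg, zpow_natCast, hXdef]
  have hclv : IsCLV (2 ^ lam) lc := by
    constructor
    · intro i; simp [hlc]; omega
    · have : ∑ _i : Fin (2 ^ lam), (2:ℝ) ^ (-(lam:ℤ)) = X * X⁻¹ := by
        rw [Finset.sum_const, nsmul_eq_mul, Finset.card_univ, Fintype.card_fin, hXinv, hXdef]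
        norm_num
      simp only [hlc]
      rw [this, mul_inv_cancel₀ (ne_of_gt hXpos)]
  have hble : ∀ (l : Fin (2 ^ lam) → ℤ),
      BddAbove (Set.range fun i => ((l i : ℝ) + Real.logb 2 (p i))) :=
    fun l => Set.Finite.bddAbove (Set.finite_range _)
  have hRlc : Rstar (2 ^ lam) lc p = (lam:ℝ) + Real.logb 2 p₁ := by
    apply le_antisymm
    · apply ciSup_le
      intro i
      have h1 : p i ≤ p₁ := by
        have hle : i0 ≤ i := by
          show i0.val ≤ i.val
          simp [hi0]
        have := hmono i0 i hle
        rwa [h0] at this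
      have : Real.logb 2 (p i) ≤ Real.logb 2 p₁ :=
        (Real.logb_le_logb one_lt_two (hpos i) hp1pos).mpr h1
      simp only [hlc]
      push_cast
      linarith
    · show (lam:ℝ) + Real.logb 2 p₁ ≤ ⨆ i : Fin (2 ^ lam), ((lc i : ℝ) + Real.logb 2 (p i))
      have h := le_ciSup (hble lc) i0
      rw [h0] at h
      exact le_trans (le_of_eq (by simp only [hlc]; push_cast; ring)) h
  -- key lower bound
  have key : ∀ l : Fin (2 ^ lam) → ℤ, IsCLV (2 ^ lam) l →
      (lam:ℝ) + Real.logb 2 p₁ ≤ Rstar (2 ^ lam) l p := by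
    intro l hl
    by_contra hcon
    push_neg at hcon
    have hterm : ∀ i, (l i : ℝ) + Real.logb 2 (p i) < (lam:ℝ) + Real.logb 2 p₁ :=
      fun i => lt_of_le_of_lt (le_ciSup (hble l) i) hcon
    -- index 0
    have hl0 : l i0 ≤ (lam:ℤ) - 1 := by
      have := hterm i0
      rw [h0] at this
      have h1 : (l i0 : ℝ) < (lam:ℝ) := by linarith
      have h2 : l i0 < (lam:ℤ) := by exact_mod_cast h1
      omega
    have hf0 : (2:ℝ) ^ (1 - (lam:ℤ)) ≤ (2:ℝ) ^ (-(l i0)) :=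
      zpow_le_zpow_right₀ one_le_two (by omega)
    -- middle indices
    have hlogq : Real.logb 2 p₁ ≤ 1 + Real.logb 2 q := by
      have h1 : Real.logb 2 p₁ ≤ Real.logb 2 (2 * q) :=
        (Real.logb_le_logb one_lt_two hp1pos (by linarith)).mpr (le_of_lt hp2q)
      rwa [Real.logb_mul two_ne_zero (ne_of_gt hqpos), Real.logb_self_eq_one one_lt_two] at h1
    have hfm : ∀ i ∈ s, X⁻¹ ≤ (2:ℝ) ^ (-(l i)) := by
      intro i hi
      obtain ⟨ha, hb⟩ := hmidmem i hi
      have := hterm i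
      rw [hmid i ha hb] at this
      have h1 : (l i : ℝ) < (lam:ℝ) + 1 := by linarith
      have h2 : l i < (lam:ℤ) + 1 := by exact_mod_cast h1
      rw [← hXinv]
      exact zpow_le_zpow_right₀ one_le_two (by omega)
    -- Kraft violation
    have hflast : (0:ℝ) < (2:ℝ) ^ (-(l ilast)) := zpow_pos (by norm_num) _
    have hsumlb : (X - 2) * X⁻¹ ≤ ∑ i ∈ s, (2:ℝ) ^ (-(l i)) := by
      have := Finset.card_nsmul_le_sum s (fun i => (2:ℝ) ^ (-(l i))) X⁻¹ hfm
      rwa [nsmul_eq_mul, hcardR] at this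
    have h2pow : (2:ℝ) ^ (1 - (lam:ℤ)) = 2 / X := by
      rw [zpow_sub₀ two_ne_zero, zpow_natCast, zpow_one, hXdef]
    have hkraft := hl.2
    rw [hsplit (fun i => (2:ℝ) ^ (-(l i)))] at hkraft
    have hone : 2 / X + (X - 2) * X⁻¹ = 1 := by field_simp; ring
    rw [h2pow] at hf0
    linarith
  -- conclude
  have hmem' : ((lam:ℝ) + Real.logb 2 p₁) ∈
      {r : ℝ | ∃ l : Fin (2 ^ lam) → ℤ, IsCLV (2 ^ lam) l ∧ Rstar (2 ^ lam) l p = r} :=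
    ⟨lc, hclv, hRlc⟩
  have hbdd : BddBelow {r : ℝ | ∃ l : Fin (2 ^ lam) → ℤ, IsCLV (2 ^ lam) l ∧ Rstar (2 ^ lam) l p = r} :=
    ⟨(lam:ℝ) + Real.logb 2 p₁, fun r ⟨l, hl, he⟩ => he ▸ key l hl⟩
  exact le_antisymm (csInf_le hbdd hmem')
    (le_csInf ⟨_, hmem'⟩ fun r ⟨l, hl, he⟩ => he ▸ key l hl)
end

section
/- Let μ ≥ 1 be an integer and let p₁ satisfy 1/(2^{μ+1} − 1) ≤ p₁ < 2^{−μ}. Define the source p on n = 2^{μ+1} − 1 symbols by p(1) = p₁ and p(i) = (1 − p₁)/(2^{μ+1} − 2) for 2 ≤ i ≤ n. Then p is a monotonically nonincreasing probability mass function and R*_opt(p) = lg((1 − p₁)/(1 − 2^{−μ})). -/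
theorem stmt13 (μ : ℕ) (hμ : 1 ≤ μ) (p₁ : ℝ)
    (h1 : 1 / ((2:ℝ) ^ (μ + 1) - 1) ≤ p₁) (h2 : p₁ < (2:ℝ) ^ (-(μ:ℤ)))
    (p : Fin (2 ^ (μ + 1) - 1) → ℝ)
    (h0 : p ⟨0, by have := Nat.one_lt_two_pow_iff.mpr (by omega : μ + 1 ≠ 0); omega⟩ = p₁)
    (hrest : ∀ i : Fin (2 ^ (μ + 1) - 1), 0 < i.val →
      p i = (1 - p₁) / ((2:ℝ) ^ (μ + 1) - 2)) :
    IsSource (2 ^ (μ + 1) - 1) p ∧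
      RstarOpt (2 ^ (μ + 1) - 1) p =
        Real.logb 2 ((1 - p₁) / (1 - (2:ℝ) ^ (-(μ:ℤ)))) := by
  -- basic numeric facts
  have hμ2 : (2:ℝ) ≤ 2 ^ μ := by
    calc (2:ℝ) = 2 ^ 1 := (pow_one 2).symm
    _ ≤ 2 ^ μ := pow_le_pow_right₀ (by norm_num) hμ
  have hμpos : (0:ℝ) < 2 ^ μ := by positivity
  have hP : (2:ℝ) ^ (μ + 1) = 2 * 2 ^ μ := by ring
  have hP4 : (4:ℝ) ≤ 2 ^ (μ + 1) := by rw [hP]; linarith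
  have hz : (2:ℝ) ^ (-(μ:ℤ)) = ((2:ℝ) ^ μ)⁻¹ := by
    rw [zpow_neg, zpow_natCast]
  have h2' : p₁ * 2 ^ μ < 1 := by
    rw [hz] at h2
    calc p₁ * 2 ^ μ < (2 ^ μ)⁻¹ * 2 ^ μ := by
          exact mul_lt_mul_of_pos_right h2 hμpos
    _ = 1 := inv_mul_cancel₀ hμpos.ne'
  have hden : (0:ℝ) < 2 ^ (μ + 1) - 1 := by linarith
  have h1' : 1 ≤ p₁ * (2 ^ (μ + 1) - 1) := (div_le_iff₀ hden).mp h1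
  have hp₁pos : 0 < p₁ := lt_of_lt_of_le (by positivity) h1
  have hp₁lt1 : p₁ < 1 := by nlinarith
  set q : ℝ := (1 - p₁) / ((2:ℝ) ^ (μ + 1) - 2) with hqdef
  have hD : (0:ℝ) < 2 ^ (μ + 1) - 2 := by linarith
  have hqpos : 0 < q := div_pos (by linarith) hD
  have hqle : q ≤ p₁ := by
    rw [hqdef, div_le_iff₀ hD]; nlinarith
  -- Fin index facts
  have hNnat : 4 ≤ 2 ^ (μ + 1) := by
    calc (4:ℕ) = 2 ^ 2 := by norm_num
    _ ≤ 2 ^ (μ + 1) := Nat.pow_le_pow_right (by norm_num) (by omega)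
  have hNpos : 0 < 2 ^ (μ + 1) - 1 := by omega
  set i0 : Fin (2 ^ (μ + 1) - 1) := ⟨0, by omega⟩ with hi0def
  haveI : Nonempty (Fin (2 ^ (μ + 1) - 1)) := ⟨i0⟩
  have h0' : p i0 = p₁ := h0
  have hq : ∀ i, i ≠ i0 → p i = q := by
    intro i hi
    exact hrest i (Nat.pos_of_ne_zero (fun h => hi (Fin.ext h)))
  have hcard : ((Finset.univ : Finset (Fin (2 ^ (μ + 1) - 1))).erase i0).card
      = 2 ^ (μ + 1) - 2 := by
    rw [Finset.card_erase_of_mem (Finset.mem_univ _), Finset.card_univ, Fintype.card_fin]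
    omega
  have hcastD : ((2 ^ (μ + 1) - 2 : ℕ) : ℝ) = 2 ^ (μ + 1) - 2 := by
    have : (2:ℕ) ≤ 2 ^ (μ + 1) := by omega
    push_cast [this]
    ring
  -- the source property
  have hsum : ∑ i, p i = 1 := by
    rw [← Finset.add_sum_erase _ p (Finset.mem_univ i0), h0']
    have he : ∑ i ∈ Finset.univ.erase i0, p i = ((2 ^ (μ + 1) - 2 : ℕ) : ℝ) * q := by
      rw [Finset.sum_congr rfl (fun i hi => hq i (Finset.ne_of_mem_erase hi)),
        Finset.sum_const, hcard, nsmul_eq_mul]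
    rw [he, hcastD, hqdef, mul_div_cancel₀ _ hD.ne']
    ring
  have hppos : ∀ i, 0 < p i := by
    intro i
    by_cases hi : i = i0
    · rw [hi, h0']; exact hp₁pos
    · rw [hq i hi]; exact hqpos
  have hsource : IsSource (2 ^ (μ + 1) - 1) p := by
    refine ⟨hppos, hsum, ?_⟩
    intro i j hij
    by_cases hj : j = i0
    · have hi : i = i0 := by
        subst hj
        exact Fin.ext (Nat.le_zero.mp hij)
      rw [hi, hj]
    · rw [hq j hj]
      by_cases hi : i = i0
      · rw [hi, h0']; exact hqle
      · rw [hq i hi]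
  -- log identities
  have hA : (1:ℝ) - 2 ^ (-(μ:ℤ)) = (2 ^ (μ + 1) - 2) / 2 ^ (μ + 1) := by
    rw [hz, hP]
    field_simp
  have hArg : (1 - p₁) / (1 - (2:ℝ) ^ (-(μ:ℤ))) = 2 ^ (μ + 1) * q := by
    rw [hA, div_div_eq_mul_div, hqdef]
    ring
  set r : ℝ := Real.logb 2 ((1 - p₁) / (1 - (2:ℝ) ^ (-(μ:ℤ)))) with hrdef
  have hPpos : (0:ℝ) < 2 ^ (μ + 1) := by positivity
  have hlogP : Real.logb 2 ((2:ℝ) ^ (μ + 1)) = (μ:ℝ) + 1 := by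
    rw [Real.logb_pow]
    simp
  have hr : r = ((μ:ℝ) + 1) + Real.logb 2 q := by
    rw [hrdef, hArg, Real.logb_mul hPpos.ne' hqpos.ne', hlogP]
  -- upper bound witness
  set l₀ : Fin (2 ^ (μ + 1) - 1) → ℤ := fun i => if i = i0 then (μ:ℤ) else (μ:ℤ) + 1
    with hl₀def
  have hl₀i0 : l₀ i0 = (μ:ℤ) := by simp [hl₀def]
  have hl₀ne : ∀ i, i ≠ i0 → l₀ i = (μ:ℤ) + 1 := by
    intro i hi; simp [hl₀def, hi]
  have hzμ1 : (2:ℝ) ^ (-((μ:ℤ) + 1)) = ((2:ℝ) ^ (μ + 1))⁻¹ := by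
    rw [zpow_neg]
    congr 1
  have hl₀clv : IsCLV (2 ^ (μ + 1) - 1) l₀ := by
    constructor
    · intro i
      by_cases hi : i = i0
      · rw [hi, hl₀i0]; exact_mod_cast hμ
      · rw [hl₀ne i hi]
        have : (1:ℤ) ≤ (μ:ℤ) := by exact_mod_cast hμ
        omega
    · rw [← Finset.add_sum_erase _ _ (Finset.mem_univ i0)]
      have he : ∑ i ∈ Finset.univ.erase i0, (2:ℝ) ^ (-(l₀ i))
          = ((2 ^ (μ + 1) - 2 : ℕ) : ℝ) * ((2:ℝ) ^ (μ + 1))⁻¹ := by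
        rw [Finset.sum_congr rfl (fun i hi => by
          rw [hl₀ne i (Finset.ne_of_mem_erase hi), hzμ1]),
          Finset.sum_const, hcard, nsmul_eq_mul]
      rw [he, hcastD, hl₀i0, hz, hP]
      have heq : ((2:ℝ) ^ μ)⁻¹ + (2 * (2:ℝ) ^ μ - 2) * ((2:ℝ) * 2 ^ μ)⁻¹ = 1 := by
        field_simp
        ring
      linarith [heq]
  -- value of Rstar at the witness
  have hbdd : ∀ (l : Fin (2 ^ (μ + 1) - 1) → ℤ),
      BddAbove (Set.range fun i => ((l i : ℝ) + Real.logb 2 (p i))) :=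
    fun l => (Set.finite_range _).bddAbove
  have hi0term : (μ:ℝ) + Real.logb 2 p₁ ≤ r := by
    have hm : (μ:ℝ) + Real.logb 2 p₁ = Real.logb 2 ((2:ℝ) ^ μ * p₁) := by
      rw [Real.logb_mul (by positivity) hp₁pos.ne', Real.logb_pow]
      simp
    rw [hm, hrdef, hArg]
    apply Real.logb_le_logb_of_le (by norm_num) (by positivity)
    rw [hqdef, ← mul_div_assoc, le_div_iff₀ hD, hP]
    nlinarith [mul_lt_mul_of_pos_right h2' hμpos]
  have hRstar : Rstar (2 ^ (μ + 1) - 1) l₀ p = r := by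
    unfold Rstar
    apply le_antisymm
    · apply ciSup_le
      intro i
      by_cases hi : i = i0
      · rw [hi, hl₀i0, h0']
        exact_mod_cast hi0term
      · rw [hl₀ne i hi, hq i hi, hr]
        push_cast
        exact le_refl _
    · have hi1 : (1 : ℕ) < 2 ^ (μ + 1) - 1 := by omega
      set i1 : Fin (2 ^ (μ + 1) - 1) := ⟨1, hi1⟩ with hi1def
      have hne : i1 ≠ i0 := by
        intro h
        have : (1:ℕ) = 0 := congrArg Fin.val h
        omega
      have := le_ciSup (hbdd l₀) i1
      rw [hl₀ne i1 hne, hq i1 hne] at this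
      calc r = ((μ:ℝ) + 1) + Real.logb 2 q := hr
      _ = ((((μ:ℤ) + 1 : ℤ)):ℝ) + Real.logb 2 q := by push_cast; ring
      _ ≤ _ := this
  -- lower bound
  have hlow : ∀ (l : Fin (2 ^ (μ + 1) - 1) → ℤ), IsCLV (2 ^ (μ + 1) - 1) l →
      r ≤ Rstar (2 ^ (μ + 1) - 1) l p := by
    intro l hl
    by_contra hc
    push_neg at hc
    have hterm : ∀ i, ((l i : ℝ) + Real.logb 2 (p i)) < r :=
      fun i => lt_of_le_of_lt (le_ciSup (hbdd l) i) hc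
    have hle : ∀ i, i ≠ i0 → l i ≤ (μ:ℤ) := by
      intro i hi
      have := hterm i
      rw [hq i hi, hr] at this
      have h3 : (l i : ℝ) < (μ:ℝ) + 1 := by linarith
      have h4 : l i < (μ:ℤ) + 1 := by exact_mod_cast h3
      omega
    have hge : ∀ i, i ≠ i0 → ((2:ℝ) ^ μ)⁻¹ ≤ (2:ℝ) ^ (-(l i)) := by
      intro i hi
      rw [← hz]
      exact zpow_le_zpow_right₀ one_le_two (by have := hle i hi; omega)
    have hkraft := hl.2
    rw [← Finset.add_sum_erase _ _ (Finset.mem_univ i0)] at hkraft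
    have hsum2 : ((2 ^ (μ + 1) - 2 : ℕ) : ℝ) * ((2:ℝ) ^ μ)⁻¹
        ≤ ∑ i ∈ Finset.univ.erase i0, (2:ℝ) ^ (-(l i)) := by
      rw [← hcard, ← nsmul_eq_mul]
      exact Finset.card_nsmul_le_sum _ _ _
        (fun i hi => hge i (Finset.ne_of_mem_erase hi))
    rw [hcastD] at hsum2
    have hpos0 : (0:ℝ) < (2:ℝ) ^ (-(l i0)) := by positivity
    have hinv : ((2:ℝ) ^ μ)⁻¹ ≤ 2⁻¹ := by
      apply inv_anti₀ (by norm_num) hμ2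
    have hDq : (1:ℝ) ≤ ((2:ℝ) ^ (μ + 1) - 2) * ((2:ℝ) ^ μ)⁻¹ := by
      rw [hP]
      have heq : (2 * (2:ℝ) ^ μ - 2) * ((2:ℝ) ^ μ)⁻¹ = 2 - 2 * ((2:ℝ) ^ μ)⁻¹ := by
        field_simp
      rw [heq]
      linarith
    linarith
  -- conclusion
  have hmem : r ∈ {x : ℝ | ∃ l : Fin (2 ^ (μ + 1) - 1) → ℤ,
      IsCLV (2 ^ (μ + 1) - 1) l ∧ Rstar (2 ^ (μ + 1) - 1) l p = x} := ⟨l₀, hl₀clv, hRstar⟩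
  have hlb : ∀ x ∈ {x : ℝ | ∃ l : Fin (2 ^ (μ + 1) - 1) → ℤ,
      IsCLV (2 ^ (μ + 1) - 1) l ∧ Rstar (2 ^ (μ + 1) - 1) l p = x}, r ≤ x := by
    rintro x ⟨l, hclv, rfl⟩
    exact hlow l hclv
  refine ⟨hsource, ?_⟩
  unfold RstarOpt
  exact le_antisymm (csInf_le ⟨r, hlb⟩ hmem) (le_csInf ⟨r, hmem⟩ hlb)
end

section
/- For every integer μ ≥ 1 and every real p₁ with 2^{−μ} ≤ p₁ < 1/(2^μ − 1), there exist an integer n ≥ 2 and a source p on {1,…,n} with p(1) = p₁ such that R*_opt(p) = μ + lg p₁. (Thus the lower bound λ + lg p(1) of the tight-bound theorem is achieved throughout the range [2^{−λ}, 1/(2^λ − 1)).) -/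
theorem stmt14 (μ : ℕ) (hμ : 1 ≤ μ) (p₁ : ℝ)
    (h1 : (2:ℝ) ^ (-(μ:ℤ)) ≤ p₁) (h2 : p₁ < 1 / ((2:ℝ) ^ μ - 1)) :
    ∃ (n : ℕ) (hn : 2 ≤ n) (p : Fin n → ℝ), IsSource n p ∧
      p ⟨0, by omega⟩ = p₁ ∧ RstarOpt n p = (μ:ℝ) + Real.logb 2 p₁ := by
  set N := 2 ^ μ with hNdef
  have hN2 : 2 ≤ N := by
    calc 2 = 2 ^ 1 := by norm_num
    _ ≤ 2 ^ μ := Nat.pow_le_pow_right (by norm_num) hμ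
  have hNR : (N : ℝ) = (2:ℝ) ^ μ := by push_cast [hNdef]; ring
  have hp1pos : 0 < p₁ := lt_of_lt_of_le (zpow_pos two_pos _) h1
  have hpowN : (0:ℝ) < (2:ℝ) ^ μ := by positivity
  have hX : (0:ℝ) < (2:ℝ) ^ μ - 1 := by
    have : (2:ℝ) ≤ (N:ℝ) := by exact_mod_cast hN2
    rw [← hNR]; linarith
  have h2' : ((N:ℝ) - 1) * p₁ < 1 := by
    have := (lt_div_iff₀ hX).mp h2
    rw [hNR]; linarith
  have hpN : 1 ≤ (N:ℝ) * p₁ := by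
    have key : (2:ℝ) ^ μ * (2:ℝ) ^ (-(μ:ℤ)) = 1 := by
      rw [← zpow_natCast (2:ℝ) μ, ← zpow_add₀ (by norm_num : (2:ℝ) ≠ 0)]
      simp
    have := mul_le_mul_of_nonneg_left h1 (le_of_lt hpowN)
    rw [key] at this
    rw [hNR]; linarith
  set c : ℝ := 1 - ((N:ℝ) - 1) * p₁ with hcdef
  have hcpos : 0 < c := by simp only [hcdef]; linarith
  have hcle : c ≤ p₁ := by simp only [hcdef]; nlinarith
  set last : Fin N := ⟨N - 1, by omega⟩ with hlast
  set p : Fin N → ℝ := fun i => if i = last then c else p₁ with hpdef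
  have hppos : ∀ i, 0 < p i := by
    intro i; simp only [hpdef]; split <;> assumption
  have hple : ∀ i, p i ≤ p₁ := by
    intro i; simp only [hpdef]; split
    · exact hcle
    · exact le_rfl
  have hbdd : ∀ (l : Fin N → ℤ), BddAbove (Set.range fun i => ((l i : ℝ) + Real.logb 2 (p i))) :=
    fun l => (Set.finite_range _).bddAbove
  -- sum of p is 1
  have hcard : (Finset.univ.erase last).card = N - 1 := by
    rw [Finset.card_erase_of_mem (Finset.mem_univ _), Finset.card_univ, Fintype.card_fin]
  have hsum_erase : ∀ (f : Fin N → ℝ), (∀ i, i ≠ last → f i = f ⟨0, by omega⟩) →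
      True := fun _ _ => trivial
  have hsump : ∑ i, p i = 1 := by
    rw [← Finset.sum_erase_add Finset.univ p (Finset.mem_univ last)]
    have h1' : ∑ i ∈ Finset.univ.erase last, p i = ((N:ℝ) - 1) * p₁ := by
      rw [Finset.sum_congr rfl (fun i hi => by
        simp only [hpdef]; exact if_neg (Finset.ne_of_mem_erase hi))]
      rw [Finset.sum_const, hcard, nsmul_eq_mul]
      have : ((N - 1 : ℕ) : ℝ) = (N:ℝ) - 1 := by
        have := hN2; push_cast [Nat.cast_sub (by omega : 1 ≤ N)]; ring
      rw [this]
    have h2'' : p last = c := by simp [hpdef]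
    rw [h1', h2'', hcdef]; ring
  have hmono : ∀ i j : Fin N, i ≤ j → p j ≤ p i := by
    intro i j hij
    by_cases hi : i = last
    · have hj : j = last := by
        apply Fin.ext
        have h1 : (i : ℕ) ≤ (j : ℕ) := hij
        have h2 : (j : ℕ) < N := j.isLt
        have h3 : (i : ℕ) = N - 1 := by rw [hi]
        omega
      rw [hi, hj]
    · have : p i = p₁ := if_neg hi
      rw [this]; exact hple j
  -- the constant-μ code
  set l₀ : Fin N → ℤ := fun _ => (μ : ℤ) with hl₀def
  have hl₀ : IsCLV N l₀ := by
    constructor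
    · intro i; simp only [hl₀def]; exact_mod_cast hμ
    · simp only [hl₀def]
      rw [Finset.sum_const, Finset.card_univ, Fintype.card_fin, nsmul_eq_mul, hNR]
      rw [← zpow_natCast (2:ℝ) μ, ← zpow_add₀ (by norm_num : (2:ℝ) ≠ 0)]
      simp
  set v : ℝ := (μ:ℝ) + Real.logb 2 p₁ with hvdef
  have hp0 : p ⟨0, by omega⟩ = p₁ := by
    simp only [hpdef]
    rw [if_neg]
    intro h
    have : (0 : ℕ) = N - 1 := congrArg Fin.val h
    omega
  have hR₀ : Rstar N l₀ p = v := by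
    apply le_antisymm
    · apply ciSup_le
      intro i
      have hlb : Real.logb 2 (p i) ≤ Real.logb 2 p₁ :=
        Real.logb_le_logb_of_le one_lt_two (hppos i) (hple i)
      simp only [hl₀def, hvdef, Int.cast_natCast]
      linarith
    · have := le_ciSup (hbdd l₀) (⟨0, by omega⟩ : Fin N)
      rw [hp0] at this
      simp only [hl₀def, Int.cast_natCast] at this
      exact this
  -- lower bound for any CLV
  have hlow : ∀ l : Fin N → ℤ, IsCLV N l → v ≤ Rstar N l p := by
    rintro l ⟨hl1, hl2⟩
    have key : ∃ i : Fin N, i ≠ last ∧ (μ:ℤ) ≤ l i := by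
      by_contra hcon
      push_neg at hcon
      have hbig : ∀ i ∈ Finset.univ.erase last,
          (2:ℝ) ^ (-((μ:ℤ) - 1)) ≤ (2:ℝ) ^ (-(l i)) := by
        intro i hi
        apply zpow_le_zpow_right₀ one_le_two
        have := hcon i (Finset.ne_of_mem_erase hi)
        omega
      have hsum' : ((N:ℝ) - 1) * (2:ℝ) ^ (-((μ:ℤ) - 1)) ≤
          ∑ i ∈ Finset.univ.erase last, (2:ℝ) ^ (-(l i)) := by
        calc ((N:ℝ) - 1) * (2:ℝ) ^ (-((μ:ℤ) - 1))
            = ∑ _i ∈ Finset.univ.erase last, (2:ℝ) ^ (-((μ:ℤ) - 1)) := by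
              rw [Finset.sum_const, hcard, nsmul_eq_mul]
              have : ((N - 1 : ℕ) : ℝ) = (N:ℝ) - 1 := by
                push_cast [Nat.cast_sub (by omega : 1 ≤ N)]; ring
              rw [this]
          _ ≤ _ := Finset.sum_le_sum hbig
      have h1le : (1:ℝ) ≤ ((N:ℝ) - 1) * (2:ℝ) ^ (-((μ:ℤ) - 1)) := by
        have hx1 : (2:ℝ) ^ μ * (2:ℝ) ^ (-((μ:ℤ) - 1)) = 2 := by
          rw [← zpow_natCast (2:ℝ) μ, ← zpow_add₀ (by norm_num : (2:ℝ) ≠ 0)]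
          norm_num
        have hx2 : (2:ℝ) ^ (-((μ:ℤ) - 1)) ≤ 1 := by
          have : (2:ℝ) ^ (-((μ:ℤ) - 1)) ≤ (2:ℝ) ^ (0:ℤ) :=
            zpow_le_zpow_right₀ one_le_two (by omega)
          simpa using this
        have hexp : ((N:ℝ) - 1) * (2:ℝ) ^ (-((μ:ℤ) - 1)) =
            (N:ℝ) * (2:ℝ) ^ (-((μ:ℤ) - 1)) - (2:ℝ) ^ (-((μ:ℤ) - 1)) := by ring
        rw [hexp, hNR]
        linarith
      have hlastpos : (0:ℝ) < (2:ℝ) ^ (-(l last)) := zpow_pos two_pos _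
      rw [← Finset.sum_erase_add Finset.univ _ (Finset.mem_univ last)] at hl2
      linarith
    obtain ⟨i, hine, hile⟩ := key
    have hpi : p i = p₁ := if_neg hine
    have hmu : (μ:ℝ) ≤ (l i : ℝ) := by exact_mod_cast hile
    have : v ≤ (l i : ℝ) + Real.logb 2 (p i) := by
      rw [hpi, hvdef]; linarith
    exact this.trans (le_ciSup (hbdd l) i)
  refine ⟨N, hN2, p, ⟨hppos, hsump, hmono⟩, hp0, ?_⟩
  have hmem : v ∈ {r : ℝ | ∃ l : Fin N → ℤ, IsCLV N l ∧ Rstar N l p = r} := ⟨l₀, hl₀, hR₀⟩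
  have hbelow : v ∈ lowerBounds {r : ℝ | ∃ l : Fin N → ℤ, IsCLV N l ∧ Rstar N l p = r} := by
    rintro r ⟨l, hl, rfl⟩
    exact hlow l hl
  exact le_antisymm (csInf_le ⟨v, hbelow⟩ hmem) (le_csInf ⟨v, hmem⟩ hbelow)
end

section
/- Let ν ≥ 2 be an integer and let p₁ satisfy 1/(2^ν − 1) < p₁ < 2^{−(ν−1)}. Define the source p on n = 2^ν − 1 symbols by p(1) = p₁ and p(i) = (1 − p₁)/(2^ν − 2) for 2 ≤ i ≤ n. Then p is a monotonically nonincreasing probability mass function, R*_opt(p) = ν + lg(1 − p₁) − lg(2^ν − 2), and every codeword-length vector l ∈ ℒ_n with R*(l,p) = R*_opt(p) satisfies l(1) = ν − 1. (This shows tightness of the bound 'p(1) ≤ 1/(2^ν − 1) implies an optimal code with l(1) ≥ ν exists'.) -/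
theorem stmt18 (ν : ℕ) (hν : 2 ≤ ν) (p₁ : ℝ)
    (h1 : 1 / ((2:ℝ) ^ ν - 1) < p₁) (h2 : p₁ < (2:ℝ) ^ (-(ν:ℤ) + 1))
    (p : Fin (2 ^ ν - 1) → ℝ)
    (h0 : p ⟨0, by have := Nat.one_lt_two_pow_iff.mpr (by omega : ν ≠ 0); omega⟩ = p₁)
    (hrest : ∀ i : Fin (2 ^ ν - 1), 0 < i.val →
      p i = (1 - p₁) / ((2:ℝ) ^ ν - 2)) :
    IsSource (2 ^ ν - 1) p ∧
      RstarOpt (2 ^ ν - 1) p =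
        (ν:ℝ) + Real.logb 2 (1 - p₁) - Real.logb 2 ((2:ℝ) ^ ν - 2) ∧
      ∀ l : Fin (2 ^ ν - 1) → ℤ, IsCLV (2 ^ ν - 1) l →
        Rstar (2 ^ ν - 1) l p = RstarOpt (2 ^ ν - 1) p →
        l ⟨0, by have := Nat.one_lt_two_pow_iff.mpr (by omega : ν ≠ 0); omega⟩ = (ν:ℤ) - 1 := by
  have h4n : 4 ≤ 2 ^ ν := by
    calc 4 = 2 ^ 2 := by norm_num
    _ ≤ 2 ^ ν := Nat.pow_le_pow_right (by norm_num) hν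
  set i0 : Fin (2 ^ ν - 1) := ⟨0, by omega⟩ with hi0def
  have hi0v : i0.val = 0 := rfl
  haveI : Nonempty (Fin (2 ^ ν - 1)) := ⟨i0⟩
  have hpi0 : p i0 = p₁ := h0
  have h4r : (4:ℝ) ≤ (2:ℝ) ^ ν := by
    have : ((4:ℕ):ℝ) ≤ ((2 ^ ν : ℕ):ℝ) := Nat.cast_le.mpr h4n
    push_cast at this; linarith
  have hpow_pos : (0:ℝ) < (2:ℝ) ^ ν := by linarith
  have hpow_ne : ((2:ℝ) ^ ν) ≠ 0 := ne_of_gt hpow_pos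
  have hp2 : (0:ℝ) < (2:ℝ) ^ ν - 2 := by linarith
  have hp1 : (0:ℝ) < (2:ℝ) ^ ν - 1 := by linarith
  have hp1pos : 0 < p₁ := lt_trans (by positivity) h1
  have hzpow1 : (2:ℝ) ^ (-(ν:ℤ) + 1) = 2 / (2:ℝ) ^ ν := by
    rw [show -(ν:ℤ) + 1 = 1 - (ν:ℤ) by ring, zpow_sub₀ (two_ne_zero), zpow_one, zpow_natCast]
  have hp1lt : p₁ < 2 / (2:ℝ) ^ ν := by rwa [hzpow1] at h2
  have hp1mul : p₁ * (2:ℝ) ^ ν < 2 := (lt_div_iff₀ hpow_pos).mp hp1lt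
  have hp1lt1 : p₁ < 1 := by nlinarith
  set q : ℝ := (1 - p₁) / ((2:ℝ) ^ ν - 2) with hq
  have hq_pos : 0 < q := div_pos (by linarith) hp2
  have h1' : 1 < p₁ * ((2:ℝ) ^ ν - 1) := by
    rw [div_lt_iff₀ hp1] at h1; linarith
  have hqp : q < p₁ := by
    rw [hq, div_lt_iff₀ hp2]; nlinarith
  have hp1le2q : p₁ ≤ 2 * q := by
    rw [hq, show 2 * ((1 - p₁) / ((2:ℝ) ^ ν - 2)) = (2 * (1 - p₁)) / ((2:ℝ) ^ ν - 2) by ring,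
      le_div_iff₀ hp2]
    nlinarith
  have hpq : ∀ i : Fin (2 ^ ν - 1), i ≠ i0 → p i = q := by
    intro i hi
    refine hrest i ?_
    rcases Nat.eq_zero_or_pos i.val with h | h
    · exact absurd (Fin.ext (by omega)) hi
    · exact h
  have hsum_split : ∀ f : Fin (2 ^ ν - 1) → ℝ,
      ∑ i, f i = f i0 + ∑ i ∈ Finset.univ.erase i0, f i :=
    fun f => (Finset.add_sum_erase _ f (Finset.mem_univ i0)).symm
  have hcard : (((Finset.univ.erase i0) : Finset (Fin (2 ^ ν - 1))).card : ℝ)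
      = (2:ℝ) ^ ν - 2 := by
    rw [Finset.card_erase_of_mem (Finset.mem_univ _), Finset.card_univ, Fintype.card_fin]
    rw [show 2 ^ ν - 1 - 1 = 2 ^ ν - 2 by omega, Nat.cast_sub (by omega)]
    push_cast; ring
  have hsum_const : ∀ (c : ℝ) (f : Fin (2 ^ ν - 1) → ℝ), (∀ i, i ≠ i0 → f i = c) →
      ∑ i ∈ Finset.univ.erase i0, f i = ((2:ℝ) ^ ν - 2) * c := by
    intro c f hf
    rw [Finset.sum_congr rfl (fun i hi => hf i (Finset.ne_of_mem_erase hi)),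
      Finset.sum_const, nsmul_eq_mul, hcard]
  have hqmul : ((2:ℝ) ^ ν - 2) * q = 1 - p₁ := by
    rw [hq]; field_simp
  have hSource : IsSource (2 ^ ν - 1) p := by
    refine ⟨?_, ?_, ?_⟩
    · intro i
      by_cases hi : i = i0
      · rw [hi, hpi0]; exact hp1pos
      · rw [hpq i hi]; exact hq_pos
    · rw [hsum_split p, hpi0, hsum_const q p hpq, hqmul]; ring
    · intro i j hij
      by_cases hj : j = i0
      · have hij' : i.val ≤ j.val := hij
        have : i = i0 := by
          refine Fin.ext ?_
          have : j.val = 0 := by rw [hj, hi0v]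
          omega
        rw [this, hj]
      · rw [hpq j hj]
        by_cases hi : i = i0
        · rw [hi, hpi0]; exact hqp.le
        · rw [hpq i hi]
  set r : ℝ := (ν:ℝ) + Real.logb 2 q with hr
  have hr_eq : r = (ν:ℝ) + Real.logb 2 (1 - p₁) - Real.logb 2 ((2:ℝ) ^ ν - 2) := by
    rw [hr, hq, Real.logb_div (by linarith) (ne_of_gt hp2)]; ring
  have hzν : (2:ℝ) ^ (-(ν:ℤ)) = 1 / (2:ℝ) ^ ν := by
    rw [zpow_neg, zpow_natCast, one_div]
  have hzν1 : (2:ℝ) ^ (-((ν:ℤ) - 1)) = 2 / (2:ℝ) ^ ν := by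
    rw [show -((ν:ℤ) - 1) = 1 - (ν:ℤ) by ring, zpow_sub₀ (two_ne_zero), zpow_one, zpow_natCast]
  set l₀ : Fin (2 ^ ν - 1) → ℤ := fun i => if i = i0 then (ν:ℤ) - 1 else (ν:ℤ) with hl₀
  have hl₀0 : l₀ i0 = (ν:ℤ) - 1 := by simp [hl₀]
  have hl₀i : ∀ i, i ≠ i0 → l₀ i = (ν:ℤ) := by intro i hi; simp [hl₀, hi]
  have hCLV₀ : IsCLV (2 ^ ν - 1) l₀ := by
    constructor
    · intro i
      by_cases hi : i = i0
      · rw [hi, hl₀0]; omega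
      · rw [hl₀i i hi]; omega
    · rw [hsum_split (fun i => (2:ℝ) ^ (-(l₀ i))),
        hsum_const ((2:ℝ) ^ (-(ν:ℤ))) _ (fun i hi => by rw [hl₀i i hi])]
      rw [hl₀0, hzν1, hzν]
      apply le_of_eq
      field_simp
      ring
  have hlogq_le : Real.logb 2 p₁ ≤ 1 + Real.logb 2 q := by
    have h2q : Real.logb 2 (2 * q) = 1 + Real.logb 2 q := by
      rw [Real.logb_mul (two_ne_zero) (ne_of_gt hq_pos), Real.logb_self_eq_one (by norm_num)]
    rw [← h2q]
    exact Real.logb_le_logb_of_le (by norm_num) hp1pos hp1le2q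
  set i1 : Fin (2 ^ ν - 1) := ⟨1, by omega⟩ with hi1def
  have hi1v : i1.val = 1 := rfl
  have hi1 : i1 ≠ i0 := by
    intro h
    have := congrArg Fin.val h
    rw [hi1v, hi0v] at this
    exact one_ne_zero this
  have hRstar₀ : Rstar (2 ^ ν - 1) l₀ p = r := by
    apply le_antisymm
    · apply ciSup_le
      intro i
      by_cases hi : i = i0
      · rw [hi, hl₀0, hpi0, hr]
        push_cast
        linarith
      · rw [hl₀i i hi, hpq i hi, hr]
        push_cast
        exact le_rfl
    · have heq : r = (l₀ i1 : ℝ) + Real.logb 2 (p i1) := by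
        rw [hl₀i i1 hi1, hpq i1 hi1, hr]
        push_cast
        ring
      rw [heq]
      exact le_ciSup (f := fun j : Fin (2 ^ ν - 1) => ((l₀ j : ℝ) + Real.logb 2 (p j)))
        (Set.Finite.bddAbove (Set.finite_range _)) i1
  have hLB : ∀ l : Fin (2 ^ ν - 1) → ℤ, IsCLV (2 ^ ν - 1) l → r ≤ Rstar (2 ^ ν - 1) l p := by
    intro l hlc
    obtain ⟨hl1, hlK⟩ := hlc
    by_contra hcon
    push_neg at hcon
    have hterm : ∀ i, (l i : ℝ) + Real.logb 2 (p i) < r := by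
      intro i
      refine lt_of_le_of_lt ?_ hcon
      exact le_ciSup (f := fun j : Fin (2 ^ ν - 1) => ((l j : ℝ) + Real.logb 2 (p j)))
        (Set.Finite.bddAbove (Set.finite_range _)) i
    have hli : ∀ i, i ≠ i0 → -((ν:ℤ) - 1) ≤ -(l i) := by
      intro i hi
      have h := hterm i
      rw [hpq i hi, hr] at h
      have h' : (l i : ℝ) < (ν:ℝ) := by linarith
      have : l i < (ν:ℤ) := by exact_mod_cast h'
      omega
    have hbig : ∀ i ∈ Finset.univ.erase i0, 2 / (2:ℝ) ^ ν ≤ (2:ℝ) ^ (-(l i)) := by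
      intro i hi
      rw [← hzν1]
      exact zpow_le_zpow_right₀ one_le_two (hli i (Finset.ne_of_mem_erase hi))
    have hsumbig : ((2:ℝ) ^ ν - 2) * (2 / (2:ℝ) ^ ν) ≤
        ∑ i ∈ Finset.univ.erase i0, (2:ℝ) ^ (-(l i)) := by
      calc ((2:ℝ) ^ ν - 2) * (2 / (2:ℝ) ^ ν)
          = ∑ _i ∈ Finset.univ.erase i0, 2 / (2:ℝ) ^ ν := by
            rw [Finset.sum_const, nsmul_eq_mul, hcard]
      _ ≤ _ := Finset.sum_le_sum hbig
    have hone : (1:ℝ) ≤ ((2:ℝ) ^ ν - 2) * (2 / (2:ℝ) ^ ν) := by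
      have heq : ((2:ℝ) ^ ν - 2) * (2 / (2:ℝ) ^ ν) - 1 = ((2:ℝ) ^ ν - 4) / (2:ℝ) ^ ν := by
        field_simp; ring
      have hnn : (0:ℝ) ≤ ((2:ℝ) ^ ν - 4) / (2:ℝ) ^ ν :=
        div_nonneg (by linarith) hpow_pos.le
      linarith
    have hpos0 : (0:ℝ) < (2:ℝ) ^ (-(l i0)) := by positivity
    rw [hsum_split (fun i => (2:ℝ) ^ (-(l i)))] at hlK
    try simp only [] at hlK
    linarith
  have hmem : r ∈ {x : ℝ | ∃ l : Fin (2 ^ ν - 1) → ℤ,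
      IsCLV (2 ^ ν - 1) l ∧ Rstar (2 ^ ν - 1) l p = x} := ⟨l₀, hCLV₀, hRstar₀⟩
  have hOpt : RstarOpt (2 ^ ν - 1) p = r := by
    apply le_antisymm
    · exact csInf_le ⟨r, by rintro x ⟨l, hl, rfl⟩; exact hLB l hl⟩ hmem
    · exact le_csInf ⟨r, hmem⟩ (by rintro x ⟨l, hl, rfl⟩; exact hLB l hl)
  refine ⟨hSource, by rw [hOpt, hr_eq], ?_⟩
  intro l hl hRl
  obtain ⟨hl1, hlK⟩ := hl
  rw [hOpt] at hRl
  have hterm : ∀ i, (l i : ℝ) + Real.logb 2 (p i) ≤ r := fun i => by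
    rw [← hRl]
    exact le_ciSup (f := fun j : Fin (2 ^ ν - 1) => ((l j : ℝ) + Real.logb 2 (p j)))
      (Set.Finite.bddAbove (Set.finite_range _)) i
  have hli : ∀ i, i ≠ i0 → -(ν:ℤ) ≤ -(l i) := by
    intro i hi
    have h := hterm i
    rw [hpq i hi, hr] at h
    have h' : (l i : ℝ) ≤ (ν:ℝ) := by linarith
    have : l i ≤ (ν:ℤ) := by exact_mod_cast h'
    omega
  have hl0lt : l i0 < (ν:ℤ) := by
    have h := hterm i0
    rw [hpi0, hr] at h
    have hlog : Real.logb 2 q < Real.logb 2 p₁ :=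
      Real.logb_lt_logb (by norm_num) hq_pos hqp
    have : (l i0 : ℝ) < (ν:ℝ) := by linarith
    exact_mod_cast this
  have hbig : ∀ i ∈ Finset.univ.erase i0, 1 / (2:ℝ) ^ ν ≤ (2:ℝ) ^ (-(l i)) := by
    intro i hi
    rw [← hzν]
    exact zpow_le_zpow_right₀ one_le_two (hli i (Finset.ne_of_mem_erase hi))
  have hsumbig : ((2:ℝ) ^ ν - 2) * (1 / (2:ℝ) ^ ν) ≤
      ∑ i ∈ Finset.univ.erase i0, (2:ℝ) ^ (-(l i)) := by
    calc ((2:ℝ) ^ ν - 2) * (1 / (2:ℝ) ^ ν)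
        = ∑ _i ∈ Finset.univ.erase i0, 1 / (2:ℝ) ^ ν := by
          rw [Finset.sum_const, nsmul_eq_mul, hcard]
    _ ≤ _ := Finset.sum_le_sum hbig
  rw [hsum_split (fun i => (2:ℝ) ^ (-(l i)))] at hlK
  try simp only [] at hlK
  have heq2 : ((2:ℝ) ^ ν - 2) * (1 / (2:ℝ) ^ ν) = 1 - 2 / (2:ℝ) ^ ν := by
    field_simp
  have hle : (2:ℝ) ^ (-(l i0)) ≤ (2:ℝ) ^ (-((ν:ℤ) - 1)) := by
    rw [hzν1]
    linarith
  have hge : (ν:ℤ) - 1 ≤ l i0 := by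
    have := (zpow_le_zpow_iff_right₀ (one_lt_two (α := ℝ))).mp hle
    omega
  show l i0 = (ν:ℤ) - 1
  omega
end

section
/- For every source p, every codeword-length vector l ∈ ℒ_n, and all reals 0 < c ≤ d: R̄(l,p) ≤ R^c(l,p) ≤ R^d(l,p) ≤ R*(l,p), where R̄(l,p) = ∑_i p(i)(l(i) + lg p(i)) is the average redundancy, R^d(l,p) = (1/d)·lg ∑_{i=1}^n p(i)^{1+d} 2^{d·l(i)} is the d-th exponential redundancy, and R*(l,p) = max_i (l(i) + lg p(i)). Consequently, taking minima over l ∈ ℒ_n, 0 ≤ R̄_opt(p) ≤ R^d_opt(p) ≤ R*_opt(p) < 1 for every d > 0. -/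
/-- Average redundancy `R̄(l,p) = ∑ p(i)(l(i) + lg p(i))`. -/
noncomputable def Rbar (n : ℕ) (l : Fin n → ℤ) (p : Fin n → ℝ) : ℝ :=
  ∑ i, p i * ((l i : ℝ) + Real.logb 2 (p i))

/-- Minimum average redundancy over all codeword-length vectors. -/
noncomputable def RbarOpt (n : ℕ) (p : Fin n → ℝ) : ℝ :=
  sInf {r : ℝ | ∃ l : Fin n → ℤ, IsCLV n l ∧ Rbar n l p = r}

/-- The d-th exponential redundancy `R^d(l,p) = (1/d) lg ∑ p(i)^{1+d} 2^{d l(i)}`. -/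
noncomputable def Rd (n : ℕ) (d : ℝ) (l : Fin n → ℤ) (p : Fin n → ℝ) : ℝ :=
  (1 / d) * Real.logb 2 (∑ i, p i ^ (1 + d) * (2:ℝ) ^ (d * (l i : ℝ)))

/-- Minimum d-th exponential redundancy over all codeword-length vectors. -/
noncomputable def RdOpt (n : ℕ) (d : ℝ) (p : Fin n → ℝ) : ℝ :=
  sInf {r : ℝ | ∃ l : Fin n → ℤ, IsCLV n l ∧ Rd n d l p = r}

section Helpers

open Finset Real

lemma myterm {x : ℝ} (hx : 0 < x) (t d : ℝ) :
    x ^ (1 + d) * (2:ℝ) ^ (d * t) = x * (x * (2:ℝ) ^ t) ^ d := by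
  rw [Real.mul_rpow hx.le (Real.rpow_nonneg (by norm_num) t),
    ← Real.rpow_mul (by norm_num : (0:ℝ) ≤ 2), Real.rpow_add hx, Real.rpow_one,
    mul_comm t d]
  ring

lemma myX {x : ℝ} (hx : 0 < x) (m : ℤ) :
    (m:ℝ) + Real.logb 2 x = Real.logb 2 (x * (2:ℝ) ^ (m:ℝ)) := by
  rw [Real.logb_mul (ne_of_gt hx) (ne_of_gt (Real.rpow_pos_of_pos two_pos _)),
    Real.logb_rpow (by norm_num) (by norm_num)]
  ring

lemma part1 (n : ℕ) (hn : 2 ≤ n) (p : Fin n → ℝ) (hpos : ∀ i, 0 < p i)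
    (hsum : ∑ i, p i = 1) (l : Fin n → ℤ) (c d : ℝ) (hc : 0 < c) (hcd : c ≤ d) :
    Rbar n l p ≤ Rd n c l p ∧ Rd n c l p ≤ Rd n d l p ∧ Rd n d l p ≤ Rstar n l p := by
  haveI : Nonempty (Fin n) := ⟨⟨0, by omega⟩⟩
  have hd : 0 < d := lt_of_lt_of_le hc hcd
  set a : Fin n → ℝ := fun i => p i * (2:ℝ) ^ ((l i : ℝ)) with ha_def
  have ha : ∀ i, 0 < a i := fun i => mul_pos (hpos i) (Real.rpow_pos_of_pos two_pos _)
  have hX : ∀ i, (l i : ℝ) + Real.logb 2 (p i) = Real.logb 2 (a i) :=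
    fun i => myX (hpos i) (l i)
  set S : ℝ → ℝ := fun e => ∑ i, p i * a i ^ e with hS_def
  have hS : ∀ e, 0 < S e := fun e =>
    Finset.sum_pos (fun i _ => mul_pos (hpos i) (Real.rpow_pos_of_pos (ha i) e))
      univ_nonempty
  have hRd : ∀ e, Rd n e l p = (1/e) * Real.logb 2 (S e) := by
    intro e
    unfold Rd
    congr 2
    exact Finset.sum_congr rfl fun i _ => myterm (hpos i) _ e
  refine ⟨?_, ?_, ?_⟩
  · -- Rbar ≤ Rd c
    have hQ := Real.geom_mean_le_arith_mean_weighted Finset.univ p (fun i => a i ^ c)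
      (fun i _ => (hpos i).le) hsum (fun i _ => (Real.rpow_pos_of_pos (ha i) c).le)
    have hQpos : 0 < ∏ i, (a i ^ c) ^ p i :=
      Finset.prod_pos fun i _ => Real.rpow_pos_of_pos (Real.rpow_pos_of_pos (ha i) c) _
    have hlog : Real.logb 2 (∏ i, (a i ^ c) ^ p i) = c * Rbar n l p := by
      rw [Real.logb_prod _ _ (fun i _ => ne_of_gt (Real.rpow_pos_of_pos (Real.rpow_pos_of_pos (ha i) c) _))]
      unfold Rbar
      rw [Finset.mul_sum]
      refine Finset.sum_congr rfl fun i _ => ?_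
      rw [hX i, Real.logb_rpow_eq_mul_logb_of_pos (Real.rpow_pos_of_pos (ha i) c),
        Real.logb_rpow_eq_mul_logb_of_pos (ha i)]
      ring
    have hmono : Real.logb 2 (∏ i, (a i ^ c) ^ p i) ≤ Real.logb 2 (S c) :=
      Real.logb_le_logb_of_le one_lt_two hQpos hQ
    rw [hlog] at hmono
    have := mul_le_mul_of_nonneg_left hmono (by positivity : (0:ℝ) ≤ 1/c)
    rw [hRd c]
    calc Rbar n l p = (1/c) * (c * Rbar n l p) := by field_simp
      _ ≤ (1/c) * Real.logb 2 (S c) := this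
  · -- Rd c ≤ Rd d
    have hq : 1 ≤ d / c := (one_le_div hc).mpr hcd
    have hpow := Real.rpow_arith_mean_le_arith_mean_rpow Finset.univ p (fun i => a i ^ c)
      (fun i _ => (hpos i).le) hsum (fun i _ => (Real.rpow_pos_of_pos (ha i) c).le) hq
    have hsum2 : ∑ i, p i * (a i ^ c) ^ (d/c) = S d := by
      refine Finset.sum_congr rfl fun i _ => ?_
      rw [← Real.rpow_mul (ha i).le]
      congr 2
      field_simp
    rw [hsum2] at hpow
    have hmono : Real.logb 2 ((S c) ^ (d/c)) ≤ Real.logb 2 (S d) :=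
      Real.logb_le_logb_of_le one_lt_two (Real.rpow_pos_of_pos (hS c) _) hpow
    rw [Real.logb_rpow_eq_mul_logb_of_pos (hS c)] at hmono
    have h2 := mul_le_mul_of_nonneg_left hmono (by positivity : (0:ℝ) ≤ 1/d)
    rw [hRd c, hRd d]
    calc (1/c) * Real.logb 2 (S c) = (1/d) * (d/c * Real.logb 2 (S c)) := by
          field_simp
      _ ≤ (1/d) * Real.logb 2 (S d) := h2
  · -- Rd d ≤ Rstar
    have hbdd : BddAbove (Set.range fun i => (l i : ℝ) + Real.logb 2 (p i)) :=
      Set.Finite.bddAbove (Set.finite_range _)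
    have hle : ∀ i, (l i : ℝ) + Real.logb 2 (p i) ≤ Rstar n l p :=
      fun i => le_ciSup hbdd i
    have haR : ∀ i, a i ≤ (2:ℝ) ^ (Rstar n l p) := by
      intro i
      have h1 := hle i
      rw [hX i] at h1
      calc a i = (2:ℝ) ^ (Real.logb 2 (a i)) :=
            (Real.rpow_logb two_pos (by norm_num) (ha i)).symm
        _ ≤ (2:ℝ) ^ (Rstar n l p) := Real.rpow_le_rpow_of_exponent_le one_le_two h1
    have hSle : S d ≤ (2:ℝ) ^ (d * Rstar n l p) := by
      calc S d ≤ ∑ i, p i * ((2:ℝ) ^ (Rstar n l p)) ^ d :=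
            Finset.sum_le_sum fun i _ => mul_le_mul_of_nonneg_left
              (Real.rpow_le_rpow (ha i).le (haR i) hd.le) (hpos i).le
        _ = ((2:ℝ) ^ (Rstar n l p)) ^ d := by rw [← Finset.sum_mul, hsum, one_mul]
        _ = (2:ℝ) ^ (d * Rstar n l p) := by
            rw [← Real.rpow_mul (by norm_num : (0:ℝ) ≤ 2), mul_comm]
    have hmono : Real.logb 2 (S d) ≤ d * Rstar n l p := by
      calc Real.logb 2 (S d) ≤ Real.logb 2 ((2:ℝ) ^ (d * Rstar n l p)) :=
            Real.logb_le_logb_of_le one_lt_two (hS d) hSle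
        _ = d * Rstar n l p := Real.logb_rpow (by norm_num) (by norm_num)
    have h2 := mul_le_mul_of_nonneg_left hmono (by positivity : (0:ℝ) ≤ 1/d)
    rw [hRd d]
    calc (1/d) * Real.logb 2 (S d) ≤ (1/d) * (d * Rstar n l p) := h2
      _ = Rstar n l p := by field_simp

lemma gibbs (n : ℕ) (hn : 2 ≤ n) (p : Fin n → ℝ) (hpos : ∀ i, 0 < p i)
    (hsum : ∑ i, p i = 1) (l : Fin n → ℤ) (hl : IsCLV n l) : 0 ≤ Rbar n l p := by
  set a : Fin n → ℝ := fun i => p i * (2:ℝ) ^ ((l i : ℝ)) with ha_def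
  have ha : ∀ i, 0 < a i := fun i => mul_pos (hpos i) (Real.rpow_pos_of_pos two_pos _)
  have key : ∀ i, p i - (2:ℝ) ^ (-((l i : ℝ))) ≤ p i * Real.log (a i) := by
    intro i
    have hinv : (a i)⁻¹ = (2:ℝ) ^ (-((l i : ℝ))) / p i := by
      rw [Real.rpow_neg (by norm_num : (0:ℝ) ≤ 2)]
      rw [ha_def]
      field_simp
    have h1 : Real.log ((a i)⁻¹) ≤ (a i)⁻¹ - 1 :=
      Real.log_le_sub_one_of_pos (inv_pos.mpr (ha i))
    rw [Real.log_inv] at h1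
    -- -log a ≤ (a i)⁻¹ - 1
    have h2 := mul_le_mul_of_nonneg_left h1 (hpos i).le
    have h3 : p i * ((a i)⁻¹ - 1) = (2:ℝ) ^ (-((l i : ℝ))) - p i := by
      rw [hinv, mul_sub, mul_one, mul_comm, div_mul_cancel₀ _ (hpos i).ne']
    rw [h3] at h2
    linarith
  have hkraft : ∑ i, (2:ℝ) ^ (-((l i : ℝ))) ≤ 1 := by
    have := hl.2
    calc ∑ i, (2:ℝ) ^ (-((l i : ℝ))) = ∑ i, (2:ℝ) ^ (-(l i)) :=
          Finset.sum_congr rfl fun i _ => by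
            rw [← Real.rpow_intCast 2 (-(l i))]; push_cast; ring_nf
      _ ≤ 1 := this
  have hsumlog : 0 ≤ ∑ i, p i * Real.log (a i) := by
    have := Finset.sum_le_sum (fun i (_ : i ∈ Finset.univ) => key i)
    rw [Finset.sum_sub_distrib, hsum] at this
    linarith
  have hRbar : Rbar n l p = (∑ i, p i * Real.log (a i)) / Real.log 2 := by
    unfold Rbar
    rw [Finset.sum_div]
    refine Finset.sum_congr rfl fun i _ => ?_
    rw [myX (hpos i) (l i), Real.logb, mul_div_assoc]
  rw [hRbar]
  exact div_nonneg hsumlog (Real.log_pos one_lt_two).le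

lemma shannon (n : ℕ) (hn : 2 ≤ n) (p : Fin n → ℝ) (hpos : ∀ i, 0 < p i)
    (hsum : ∑ i, p i = 1) :
    ∃ lS : Fin n → ℤ, IsCLV n lS ∧ Rstar n lS p < 1 := by
  haveI : Nonempty (Fin n) := ⟨⟨0, by omega⟩⟩
  set lS : Fin n → ℤ := fun i => ⌈-Real.logb 2 (p i)⌉ with hlS
  have hlt1 : ∀ i, p i < 1 := by
    intro i
    have hij : (⟨0, by omega⟩ : Fin n) ≠ ⟨1, by omega⟩ := by
      simp [Fin.ext_iff]
    obtain ⟨j, hj⟩ : ∃ j : Fin n, j ≠ i := by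
      by_cases h : i = ⟨0, by omega⟩
      · exact ⟨⟨1, by omega⟩, by rw [h]; exact (Ne.symm hij)⟩
      · exact ⟨⟨0, by omega⟩, fun hc => h hc.symm⟩
    calc p i < ∑ k, p k :=
          Finset.single_lt_sum hj (Finset.mem_univ i) (Finset.mem_univ j)
            (hpos j) (fun k _ _ => (hpos k).le)
      _ = 1 := hsum
  have hneg : ∀ i, 0 < -Real.logb 2 (p i) := fun i =>
    neg_pos.mpr (Real.logb_neg one_lt_two (hpos i) (hlt1 i))
  have hl1 : ∀ i, 1 ≤ lS i := by
    intro i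
    have h : 0 < lS i := Int.ceil_pos.mpr (hneg i)
    omega
  have hle : ∀ i, (2:ℝ) ^ (-(lS i)) ≤ p i := by
    intro i
    have h1 : -Real.logb 2 (p i) ≤ (lS i : ℝ) := Int.le_ceil _
    have h2 : (-(lS i) : ℝ) ≤ Real.logb 2 (p i) := by linarith
    calc (2:ℝ) ^ (-(lS i)) = (2:ℝ) ^ ((-(lS i) : ℤ) : ℝ) := (Real.rpow_intCast 2 _).symm
      _ ≤ (2:ℝ) ^ (Real.logb 2 (p i)) :=
          Real.rpow_le_rpow_of_exponent_le one_le_two (by push_cast; linarith)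
      _ = p i := Real.rpow_logb two_pos (by norm_num) (hpos i)
  refine ⟨lS, ⟨hl1, ?_⟩, ?_⟩
  · calc ∑ i, (2:ℝ) ^ (-(lS i)) ≤ ∑ i, p i := Finset.sum_le_sum fun i _ => hle i
      _ = 1 := hsum
  · have hXlt : ∀ i, (lS i : ℝ) + Real.logb 2 (p i) < 1 := by
      intro i
      have := Int.ceil_lt_add_one (-Real.logb 2 (p i))
      have h2 : (lS i : ℝ) < -Real.logb 2 (p i) + 1 := this
      linarith
    obtain ⟨i0, hi0⟩ := Finite.exists_max (fun i => (lS i : ℝ) + Real.logb 2 (p i))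
    exact lt_of_le_of_lt (ciSup_le hi0) (hXlt i0)

end Helpers

theorem stmt19 (n : ℕ) (hn : 2 ≤ n) (p : Fin n → ℝ) (hp : IsSource n p) :
    (∀ l : Fin n → ℤ, IsCLV n l → ∀ c d : ℝ, 0 < c → c ≤ d →
      Rbar n l p ≤ Rd n c l p ∧ Rd n c l p ≤ Rd n d l p ∧ Rd n d l p ≤ Rstar n l p) ∧
    (∀ d : ℝ, 0 < d →
      0 ≤ RbarOpt n p ∧ RbarOpt n p ≤ RdOpt n d p ∧
        RdOpt n d p ≤ RstarOpt n p ∧ RstarOpt n p < 1) := by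
  obtain ⟨hpos, hsum, -⟩ := hp
  have hP1 : ∀ (l : Fin n → ℤ) (c d : ℝ), 0 < c → c ≤ d →
      Rbar n l p ≤ Rd n c l p ∧ Rd n c l p ≤ Rd n d l p ∧ Rd n d l p ≤ Rstar n l p :=
    fun l c d hc hcd => part1 n hn p hpos hsum l c d hc hcd
  refine ⟨fun l _ c d hc hcd => hP1 l c d hc hcd, ?_⟩
  intro d hd
  obtain ⟨lS, hclvS, hstarS⟩ := shannon n hn p hpos hsum
  have hG : ∀ l : Fin n → ℤ, IsCLV n l → 0 ≤ Rbar n l p :=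
    fun l hl => gibbs n hn p hpos hsum l hl
  have hBRd : ∀ l : Fin n → ℤ, Rbar n l p ≤ Rd n d l p :=
    fun l => (hP1 l d d hd le_rfl).1
  have hRdS : ∀ l : Fin n → ℤ, Rd n d l p ≤ Rstar n l p :=
    fun l => (hP1 l d d hd le_rfl).2.2
  set Sb := {r : ℝ | ∃ l : Fin n → ℤ, IsCLV n l ∧ Rbar n l p = r} with hSb
  set Sd := {r : ℝ | ∃ l : Fin n → ℤ, IsCLV n l ∧ Rd n d l p = r} with hSd
  set Ss := {r : ℝ | ∃ l : Fin n → ℤ, IsCLV n l ∧ Rstar n l p = r} with hSs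
  have hSbNe : Sb.Nonempty := ⟨Rbar n lS p, lS, hclvS, rfl⟩
  have hSdNe : Sd.Nonempty := ⟨Rd n d lS p, lS, hclvS, rfl⟩
  have hSsNe : Ss.Nonempty := ⟨Rstar n lS p, lS, hclvS, rfl⟩
  have hSb0 : ∀ r ∈ Sb, (0:ℝ) ≤ r := by
    rintro r ⟨l, hl, rfl⟩; exact hG l hl
  have hSd0 : ∀ r ∈ Sd, (0:ℝ) ≤ r := by
    rintro r ⟨l, hl, rfl⟩; exact le_trans (hG l hl) (hBRd l)
  have hSs0 : ∀ r ∈ Ss, (0:ℝ) ≤ r := by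
    rintro r ⟨l, hl, rfl⟩; exact le_trans (le_trans (hG l hl) (hBRd l)) (hRdS l)
  have hSbB : BddBelow Sb := ⟨0, fun r hr => hSb0 r hr⟩
  have hSdB : BddBelow Sd := ⟨0, fun r hr => hSd0 r hr⟩
  have hSsB : BddBelow Ss := ⟨0, fun r hr => hSs0 r hr⟩
  refine ⟨le_csInf hSbNe hSb0, ?_, ?_, ?_⟩
  · refine le_csInf hSdNe ?_
    rintro r ⟨l, hl, rfl⟩
    exact le_trans (csInf_le hSbB ⟨l, hl, rfl⟩) (hBRd l)
  · refine le_csInf hSsNe ?_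
    rintro r ⟨l, hl, rfl⟩
    exact le_trans (csInf_le hSdB ⟨l, hl, rfl⟩) (hRdS l)
  · exact lt_of_le_of_lt (csInf_le hSsB ⟨lS, hclvS, rfl⟩) hstarS
end
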